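/- arXiv:1506.08888 — 2 statements merged into one kernel-verified Lean document; each statement's English description precedes it below -/
import Mathlib

section
/- For any metric space (X,d), the metric d_0 is lower semicontinuous with respect to d: if p_n → p and q_n → q in (X,d), then liminf_{n→∞} d_0(p_n,q_n) ≥ d_0(p,q). -/
open Filter Set
open scoped ENNReal

variable {X : Type*}

/-- The length of the chain `x 0, x 1, …, x n` with respect to the distance `ρ`. -/
noncomputable def chainLengthOf (ρ : X → X → ℝ≥0∞) (x : ℕ → X) (n : ℕ) : ℝ≥0∞ :=
  ∑ k ∈ Finset.range n, ρ (x k) (x (k + 1))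

/-- `x 0, …, x n` is an `ε`-chain from `p` to `q` with respect to `ρ`. -/
def IsChainOf (ρ : X → X → ℝ≥0∞) (ε : ℝ≥0∞) (p q : X) (x : ℕ → X) (n : ℕ) : Prop :=
  x 0 = p ∧ x n = q ∧ ∀ k < n, ρ (x k) (x (k + 1)) ≤ ε

/-- `d_ε`: the infimum of lengths of `ε`-chains joining `p` to `q`. -/
noncomputable def chainDistOf (ρ : X → X → ℝ≥0∞) (ε : ℝ≥0∞) (p q : X) : ℝ≥0∞ :=
  ⨅ (n : ℕ) (x : ℕ → X) (_ : IsChainOf ρ ε p q x n), chainLengthOf ρ x n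

/-- `d_0 = sup_{ε > 0} d_ε`. -/
noncomputable def chainMetricOf (ρ : X → X → ℝ≥0∞) (p q : X) : ℝ≥0∞ :=
  ⨆ (ε : ℝ≥0∞) (_ : 0 < ε), chainDistOf ρ ε p q

/-- `d_ε` for a metric space, with `ρ = edist`. -/
noncomputable def chainDist [PseudoEMetricSpace X] (ε : ℝ≥0∞) (p q : X) : ℝ≥0∞ :=
  chainDistOf (fun a b => edist a b) ε p q

/-- `d_0` for a metric space, with `ρ = edist`. -/
noncomputable def chainMetric [PseudoEMetricSpace X] (p q : X) : ℝ≥0∞ :=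
  chainMetricOf (fun a b => edist a b) p q

/-- The length of a path `γ : [0,1] → X` with respect to `ρ`:
the supremum over partitions `0 = t 0 ≤ t 1 ≤ … ≤ t n = 1` of the partition sums. -/
noncomputable def pathLengthOf (ρ : X → X → ℝ≥0∞) (γ : ℝ → X) : ℝ≥0∞ :=
  ⨆ (n : ℕ) (t : ℕ → ℝ) (_ : t 0 = 0 ∧ t n = 1 ∧ Monotone t),
    ∑ k ∈ Finset.range n, ρ (γ (t k)) (γ (t (k + 1)))

noncomputable def pathLength [PseudoEMetricSpace X] (γ : ℝ → X) : ℝ≥0∞ :=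
  pathLengthOf (fun a b => edist a b) γ

/-- Continuity of a path `γ` on `[0,1]` with respect to the distance `ρ`. -/
def ContinuousWrt (ρ : X → X → ℝ≥0∞) (γ : ℝ → X) : Prop :=
  ∀ t ∈ Icc (0 : ℝ) 1,
    Tendsto (fun s => ρ (γ s) (γ t)) (nhdsWithin t (Icc (0 : ℝ) 1)) (nhds 0)

/-- The induced length metric with respect to `ρ`: the infimum of `ρ`-lengths of
`ρ`-continuous paths joining `p` to `q`. -/
noncomputable def lengthMetricOf (ρ : X → X → ℝ≥0∞) (p q : X) : ℝ≥0∞ :=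
  ⨅ (γ : ℝ → X) (_ : ContinuousWrt ρ γ ∧ γ 0 = p ∧ γ 1 = q), pathLengthOf ρ γ

/-- The induced length metric `d̄` of a metric space. -/
noncomputable def lengthMetric [PseudoEMetricSpace X] (p q : X) : ℝ≥0∞ :=
  lengthMetricOf (fun a b => edist a b) p q


/-! ### Auxiliary lemmas -/

lemma chainDist_le_of_isChain [PseudoEMetricSpace X] {ε : ℝ≥0∞} {p q : X} {x : ℕ → X}
    {n : ℕ} (h : IsChainOf (fun a b => edist a b) ε p q x n) :
    chainDist ε p q ≤ chainLengthOf (fun a b => edist a b) x n := by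
  refine iInf_le_of_le n (iInf_le_of_le x (iInf_le_of_le h le_rfl))

lemma chainDist_extend [PseudoEMetricSpace X] {ε : ℝ≥0∞} {p p' q q' : X}
    (hpp' : edist p p' ≤ ε) (hq'q : edist q' q ≤ ε) :
    chainDist ε p q ≤ edist p p' + chainDist ε p' q' + edist q' q := by
  have key : ∀ (n : ℕ) (x : ℕ → X), IsChainOf (fun a b => edist a b) ε p' q' x n →
      chainDist ε p q ≤ edist p p' + chainLengthOf (fun a b => edist a b) x n + edist q' q := by
    intro n x hch
    set y : ℕ → X := fun k => if k = 0 then p else if k ≤ n + 1 then x (k - 1) else q with hy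
    have hy0 : y 0 = p := by simp [hy]
    have hyk : ∀ k ≤ n, y (k + 1) = x k := by
      intro k hk
      simp only [hy]
      rw [if_neg (by omega), if_pos (by omega)]
      congr 1
    have hyend : y (n + 2) = q := by
      simp only [hy]
      rw [if_neg (by omega), if_neg (by omega)]
    have hchain : IsChainOf (fun a b => edist a b) ε p q y (n + 2) := by
      refine ⟨hy0, hyend, ?_⟩
      intro k hk
      rcases Nat.eq_zero_or_pos k with rfl | hk0
      · rw [hy0, hyk 0 (Nat.zero_le _), hch.1]
        exact hpp'
      · rcases eq_or_lt_of_le (Nat.succ_le_of_lt (by omega : k - 1 < n + 1)) with hkn | hkn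
        · -- k = n + 1
          have hk' : k = n + 1 := by omega
          subst hk'
          rw [hyk n le_rfl, hch.2.1]
          rw [show n + 1 + 1 = n + 2 from rfl, hyend]
          exact hq'q
        · -- 1 ≤ k ≤ n
          obtain ⟨j, rfl⟩ : ∃ j, k = j + 1 := ⟨k - 1, by omega⟩
          have hjn : j < n := by omega
          rw [hyk j (le_of_lt hjn), hyk (j + 1) hjn]
          exact hch.2.2 j hjn
    have hlen : chainLengthOf (fun a b => edist a b) y (n + 2)
        = edist p p' + chainLengthOf (fun a b => edist a b) x n + edist q' q := by
      simp only [chainLengthOf]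
      rw [Finset.sum_range_succ, Finset.sum_range_succ']
      have h1 : ∀ k ∈ Finset.range n,
          edist (y (k + 1)) (y (k + 1 + 1)) = edist (x k) (x (k + 1)) := by
        intro k hk
        rw [Finset.mem_range] at hk
        rw [hyk k (le_of_lt hk), hyk (k + 1) hk]
      rw [Finset.sum_congr rfl h1, hy0, hyk 0 (Nat.zero_le _), hch.1,
        hyk n le_rfl, hch.2.1, show n + 1 + 1 = n + 2 from rfl, hyend]
      ring
    calc chainDist ε p q ≤ chainLengthOf (fun a b => edist a b) y (n + 2) :=
          chainDist_le_of_isChain hchain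
      _ = edist p p' + chainLengthOf (fun a b => edist a b) x n + edist q' q := hlen
  conv_rhs => rw [chainDist, chainDistOf]
  simp only [ENNReal.iInf_add, ENNReal.add_iInf]
  exact le_iInf fun n => le_iInf fun x => le_iInf fun hch => key n x hch

lemma ennreal_liminf_add_const {ι : Type*} (F : Filter ι) [F.NeBot] (f : ι → ℝ≥0∞)
    (c : ℝ≥0∞) : liminf (fun i => f i + c) F = liminf f F + c :=
  (Monotone.map_limsInf_of_continuousAt (F := F.map f) (f := fun x : ℝ≥0∞ => x + c)
    (fun _ _ h => add_le_add_left h c) (continuous_add_right c).continuousAt).symm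

lemma chainDist_le_chainMetric [PseudoEMetricSpace X] {ε : ℝ≥0∞} (hε : 0 < ε) (p q : X) :
    chainDist ε p q ≤ chainMetric p q :=
  le_iSup₂ (f := fun ε (_ : 0 < ε) => chainDistOf (fun a b : X => edist a b) ε p q) ε hε

/-- `d_0` is lower semicontinuous with respect to `d`:
if `p_n → p` and `q_n → q` in `(X,d)`, then `liminf d_0(p_n,q_n) ≥ d_0(p,q)`. -/
theorem chainMetric_lowerSemicontinuous {X : Type*} [MetricSpace X] (p q : X)
    (pn qn : ℕ → X) (hp : Tendsto pn atTop (nhds p)) (hq : Tendsto qn atTop (nhds q)) :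
    chainMetric p q ≤ liminf (fun n => chainMetric (pn n) (qn n)) atTop := by
  rw [chainMetric, chainMetricOf]
  refine iSup₂_le fun ε hε => ?_
  show chainDist ε p q ≤ _
  refine ENNReal.le_of_forall_pos_le_add fun δ hδ _ => ?_
  set η : ℝ≥0∞ := min ε (δ / 2) with hη
  have hη0 : 0 < η := lt_min hε (by
    simp only [ENNReal.div_pos_iff]
    exact ⟨by exact_mod_cast hδ.ne', by norm_num⟩)
  have h1 : ∀ᶠ n in atTop, edist (pn n) p < η := (EMetric.tendsto_nhds.mp hp) η hη0
  have h2 : ∀ᶠ n in atTop, edist (qn n) q < η := (EMetric.tendsto_nhds.mp hq) η hη0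
  have hev : ∀ᶠ n in atTop, chainDist ε p q ≤ chainMetric (pn n) (qn n) + (δ : ℝ≥0∞) := by
    filter_upwards [h1, h2] with n h1n h2n
    have e1 : edist p (pn n) ≤ η := by rw [edist_comm]; exact h1n.le
    have e2 : edist (qn n) q ≤ η := h2n.le
    have hηε : η ≤ ε := min_le_left _ _
    calc chainDist ε p q ≤ edist p (pn n) + chainDist ε (pn n) (qn n) + edist (qn n) q :=
          chainDist_extend (e1.trans hηε) (e2.trans hηε)
      _ ≤ η + chainMetric (pn n) (qn n) + η :=
          add_le_add (add_le_add e1 (chainDist_le_chainMetric hε _ _)) e2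
      _ ≤ δ / 2 + chainMetric (pn n) (qn n) + δ / 2 := by
          gcongr <;> exact min_le_right _ _
      _ = chainMetric (pn n) (qn n) + (δ : ℝ≥0∞) := by
          rw [add_comm (δ / 2 : ℝ≥0∞), add_assoc, ENNReal.add_halves]
  have := le_liminf_of_le (f := atTop) ?_ hev
  · rwa [ennreal_liminf_add_const] at this
  · isBoundedDefault
end

section
/- If (X,d) is a complete metric space such that (d_0)_0 = d_0, then d_0 = d̄, the length metric induced by d. -/
open Filter Set
open scoped ENNReal

variable {X : Type*}

section Basic
variable {X : Type*}

lemma chain_sum_le (ρ : X → X → ℝ≥0∞) (hrefl : ∀ a, ρ a a = 0)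
    (htri : ∀ a b c, ρ a c ≤ ρ a b + ρ b c) (x : ℕ → X) :
    ∀ i j, i ≤ j → ρ (x i) (x j) ≤ ∑ k ∈ Finset.Ico i j, ρ (x k) (x (k + 1)) := by
  intro i j hij
  induction j, hij using Nat.le_induction with
  | base => simp [hrefl]
  | succ j hij ih =>
    rw [Finset.sum_Ico_succ_top (by omega)]
    exact (htri _ (x j) _).trans (add_le_add_left ih _)

lemma chainLengthOf_ge (ρ : X → X → ℝ≥0∞) (hrefl : ∀ a, ρ a a = 0)
    (htri : ∀ a b c, ρ a c ≤ ρ a b + ρ b c) (x : ℕ → X) (n : ℕ) :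
    ρ (x 0) (x n) ≤ chainLengthOf ρ x n := by
  have := chain_sum_le ρ hrefl htri x 0 n (Nat.zero_le n)
  rwa [chainLengthOf, Finset.range_eq_Ico]

lemma chainDistOf_self (ρ : X → X → ℝ≥0∞) (hrefl : ∀ a, ρ a a = 0) (ε : ℝ≥0∞) (a : X) :
    chainDistOf ρ ε a a = 0 := by
  refine le_antisymm ?_ zero_le
  have : chainDistOf ρ ε a a ≤ chainLengthOf ρ (fun _ => a) 0 := by
    refine iInf_le_of_le 0 (iInf_le_of_le (fun _ => a) (iInf_le_of_le ?_ le_rfl))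
    exact ⟨rfl, rfl, fun k hk => by omega⟩
  simpa [chainLengthOf] using this

lemma exists_chain_of_lt {ρ : X → X → ℝ≥0∞} {ε c : ℝ≥0∞} {p q : X}
    (hlt : chainDistOf ρ ε p q < c) :
    ∃ n x, IsChainOf ρ ε p q x n ∧ chainLengthOf ρ x n < c := by
  simpa [chainDistOf, iInf_lt_iff] using hlt

lemma chainDistOf_le_of_chain {ρ : X → X → ℝ≥0∞} {ε : ℝ≥0∞} {p q : X} {x : ℕ → X} {n : ℕ}
    (hx : IsChainOf ρ ε p q x n) : chainDistOf ρ ε p q ≤ chainLengthOf ρ x n :=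
  iInf_le_of_le n (iInf_le_of_le x (iInf_le_of_le hx le_rfl))

lemma chainDistOf_triangle (ρ : X → X → ℝ≥0∞) (ε : ℝ≥0∞) (p r q : X) :
    chainDistOf ρ ε p q ≤ chainDistOf ρ ε p r + chainDistOf ρ ε r q := by
  have key : ∀ (m : ℕ) (x : ℕ → X), IsChainOf ρ ε p r x m → ∀ (n : ℕ) (y : ℕ → X),
      IsChainOf ρ ε r q y n →
      chainDistOf ρ ε p q ≤ chainLengthOf ρ x m + chainLengthOf ρ y n := by
    intro m x hx n y hy
    set z : ℕ → X := fun k => if k ≤ m then x k else y (k - m) with hz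
    have hzx : ∀ k, k ≤ m → z k = x k := fun k hk => by simp [hz, hk]
    have hzy : ∀ k, m ≤ k → z k = y (k - m) := by
      intro k hk
      rcases eq_or_lt_of_le hk with rfl | hlt
      · simp [hz, hx.2.1, ← hy.1]
      · simp [hz, Nat.not_le.mpr hlt]
    have hchain : IsChainOf ρ ε p q z (m + n) := by
      refine ⟨by rw [hzx 0 (Nat.zero_le m), hx.1], ?_, ?_⟩
      · rw [hzy (m + n) (Nat.le_add_right m n)]
        simpa using hy.2.1
      · intro k hk
        by_cases hkm : k < m
        · rw [hzx k hkm.le, hzx (k + 1) hkm]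
          exact hx.2.2 k hkm
        · push_neg at hkm
          rw [hzy k hkm, hzy (k + 1) (by omega), show k + 1 - m = k - m + 1 by omega]
          exact hy.2.2 (k - m) (by omega)
    have hlen : chainLengthOf ρ z (m + n) = chainLengthOf ρ x m + chainLengthOf ρ y n := by
      unfold chainLengthOf
      rw [Finset.range_eq_Ico, ← Finset.sum_Ico_consecutive _ (Nat.zero_le m) (Nat.le_add_right m n),
        ← Finset.range_eq_Ico, Finset.sum_Ico_eq_sum_range]
      congr 1
      · exact Finset.sum_congr rfl fun k hk => by
          rw [Finset.mem_range] at hk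
          rw [hzx k hk.le, hzx (k + 1) hk]
      · rw [show m + n - m = n by omega]
        exact Finset.sum_congr rfl fun k hk => by
          rw [Finset.mem_range] at hk
          rw [hzy (m + k) (Nat.le_add_right m k), hzy (m + k + 1) (by omega),
            show m + k - m = k by omega, show m + k + 1 - m = k + 1 by omega]
    exact hlen ▸ (chainDistOf_le_of_chain hchain)
  by_cases hb : chainDistOf ρ ε p r = ⊤
  · simp [hb]
  by_cases hc : chainDistOf ρ ε r q = ⊤
  · simp [hc]
  refine ENNReal.le_of_forall_pos_le_add fun η hη _ => ?_
  have hη2 : (0 : ℝ≥0∞) < η / 2 := by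
    simp [ENNReal.div_pos_iff, hη.ne']
  obtain ⟨m, x, hx, hxl⟩ := exists_chain_of_lt
    (ENNReal.lt_add_right hb hη2.ne' : chainDistOf ρ ε p r < _)
  obtain ⟨n, y, hy, hyl⟩ := exists_chain_of_lt
    (ENNReal.lt_add_right hc hη2.ne' : chainDistOf ρ ε r q < _)
  calc chainDistOf ρ ε p q ≤ chainLengthOf ρ x m + chainLengthOf ρ y n := key m x hx n y hy
    _ ≤ (chainDistOf ρ ε p r + η / 2) + (chainDistOf ρ ε r q + η / 2) :=
        add_le_add hxl.le hyl.le
    _ = chainDistOf ρ ε p r + chainDistOf ρ ε r q + (η / 2 + η / 2) := by ring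
    _ = chainDistOf ρ ε p r + chainDistOf ρ ε r q + η := by rw [ENNReal.add_halves]

lemma chainMetricOf_self (ρ : X → X → ℝ≥0∞) (hrefl : ∀ a, ρ a a = 0) (a : X) :
    chainMetricOf ρ a a = 0 := by
  refine le_antisymm (iSup₂_le fun ε hε => ?_) zero_le
  rw [chainDistOf_self ρ hrefl ε a]

lemma chainMetricOf_triangle (ρ : X → X → ℝ≥0∞) (p r q : X) :
    chainMetricOf ρ p q ≤ chainMetricOf ρ p r + chainMetricOf ρ r q := by
  refine iSup₂_le fun ε hε => (chainDistOf_triangle ρ ε p r q).trans (add_le_add ?_ ?_)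
  · exact le_iSup₂ (f := fun ε (_ : 0 < ε) => chainDistOf ρ ε p r) ε hε
  · exact le_iSup₂ (f := fun ε (_ : 0 < ε) => chainDistOf ρ ε r q) ε hε

end Basic

section MS
variable {X : Type*} [MetricSpace X]

lemma chainMetric_self (a : X) : chainMetric a a = 0 :=
  chainMetricOf_self _ (fun a => by simp) a

lemma chainMetric_triangle (p r q : X) :
    chainMetric p q ≤ chainMetric p r + chainMetric r q :=
  chainMetricOf_triangle _ p r q

lemma edist_le_chainDist (ε : ℝ≥0∞) (p q : X) : edist p q ≤ chainDist ε p q := by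
  refine le_iInf fun n => le_iInf fun x => le_iInf fun hx => ?_
  have := chainLengthOf_ge (fun a b => edist a b) (fun a => by simp)
    (fun a b c => edist_triangle a b c) x n
  rwa [hx.1, hx.2.1] at this

lemma edist_le_chainMetric (p q : X) : edist p q ≤ chainMetric p q :=
  (edist_le_chainDist 1 p q).trans
    (le_iSup₂ (f := fun ε (_ : (0:ℝ≥0∞) < ε) => chainDist ε p q) 1 one_pos)

end MS
section Mid
variable {X : Type*} [MetricSpace X]

private noncomputable abbrev D : X → X → ℝ≥0∞ := fun a b => chainMetric a b

lemma exists_midpoint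
    (h : ∀ p q : X, chainMetricOf (fun a b => chainMetric a b) p q = chainMetric p q)
    (p q : X) (hfin : chainMetric p q ≠ ⊤) {η : ℝ≥0∞} (hη : 0 < η) :
    ∃ m : X, chainMetric p m ≤ chainMetric p q / 2 + η ∧
      chainMetric m q ≤ chainMetric p q / 2 + η := by
  rcases eq_or_ne η ⊤ with rfl | hηt
  · exact ⟨p, by simp [chainMetric_self], by simp⟩
  have hη2 : (0 : ℝ≥0∞) < η / 2 := by simp [ENNReal.div_pos_iff, hη.ne']
  have hle : chainDistOf (D : X → X → ℝ≥0∞) (η / 2) p q ≤ chainMetric p q := by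
    rw [← h p q]
    exact le_iSup₂ (f := fun ε (_ : (0:ℝ≥0∞) < ε) => chainDistOf (D : X → X → ℝ≥0∞) ε p q)
      (η / 2) hη2
  have hlt : chainDistOf (D : X → X → ℝ≥0∞) (η / 2) p q < chainMetric p q + η / 2 :=
    lt_of_le_of_lt hle (ENNReal.lt_add_right hfin hη2.ne')
  obtain ⟨n, x, hx, hxl⟩ := exists_chain_of_lt hlt
  set L : ℝ≥0∞ := chainLengthOf (D : X → X → ℝ≥0∞) x n with hL
  have htop : chainMetric p q + η / 2 ≠ ⊤ :=
    ENNReal.add_ne_top.mpr ⟨hfin, (ENNReal.div_lt_top hηt (by norm_num)).ne⟩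
  have hLfin : L ≠ ⊤ := ne_top_of_lt hxl
  -- partial sums
  set S : ℕ → ℝ≥0∞ := fun k => chainLengthOf (D : X → X → ℝ≥0∞) x k with hS
  classical
  set P : ℕ → Prop := fun k => S k ≤ L / 2 with hP
  have hP0 : P 0 := by simp [hP, hS, chainLengthOf]
  set k0 : ℕ := Nat.findGreatest P n with hk0
  have hk0n : k0 ≤ n := Nat.findGreatest_le n
  have hPk0 : P k0 := Nat.findGreatest_spec (Nat.zero_le n) hP0
  have hDtri : ∀ a b c : X, (D : X → X → ℝ≥0∞) a c ≤ D a b + D b c :=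
    fun a b c => chainMetric_triangle a b c
  have hDrefl : ∀ a : X, (D : X → X → ℝ≥0∞) a a = 0 := chainMetric_self
  have hL2 : L / 2 ≤ chainMetric p q / 2 + η / 2 / 2 := by
    calc L / 2 ≤ (chainMetric p q + η / 2) / 2 := ENNReal.div_le_div_right hxl.le 2
      _ = chainMetric p q / 2 + η / 2 / 2 := ENNReal.add_div
  refine ⟨x k0, ?_, ?_⟩
  · -- D p (x k0) ≤ S k0 ≤ L / 2
    have h1 : chainMetric p (x k0) ≤ S k0 := by
      have h2 := chain_sum_le (D : X → X → ℝ≥0∞) hDrefl hDtri x 0 k0 (Nat.zero_le k0)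
      rw [hx.1] at h2
      simpa only [hS, chainLengthOf, Finset.range_eq_Ico] using h2
    calc chainMetric p (x k0) ≤ L / 2 := h1.trans hPk0
      _ ≤ chainMetric p q / 2 + η / 2 / 2 := hL2
      _ ≤ chainMetric p q / 2 + η :=
        add_le_add_right (ENNReal.half_le_self.trans ENNReal.half_le_self) _
  · -- tail estimate
    have h2 : chainMetric (x k0) q ≤ η / 2 + L / 2 := by
      rcases eq_or_lt_of_le hk0n with heq | hltn
      · rw [heq, hx.2.1, chainMetric_self]; exact zero_le
      · have hnP : ¬ P (k0 + 1) :=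
          Nat.findGreatest_is_greatest (Nat.lt_succ_self k0) hltn
        have hgt : L / 2 < S (k0 + 1) := not_le.mp hnP
        set T' : ℝ≥0∞ := ∑ k ∈ Finset.Ico (k0 + 1) n,
          (D : X → X → ℝ≥0∞) (x k) (x (k + 1)) with hT'
        have hsplit : S (k0 + 1) + T' = L := by
          simp only [hS, hL, hT', chainLengthOf, Finset.range_eq_Ico]
          exact Finset.sum_Ico_consecutive _ (Nat.zero_le _) hltn
        have hT'le : T' ≤ L / 2 := by
          by_contra hc
          push_neg at hc
          have : L / 2 + L / 2 < S (k0 + 1) + T' := ENNReal.add_lt_add hgt hc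
          rw [ENNReal.add_halves, hsplit] at this
          exact lt_irrefl L this
        have htail : chainMetric (x k0) q ≤
            ∑ k ∈ Finset.Ico k0 n, (D : X → X → ℝ≥0∞) (x k) (x (k + 1)) := by
          have h3 := chain_sum_le (D : X → X → ℝ≥0∞) hDrefl hDtri x k0 n hk0n
          rwa [hx.2.1] at h3
        calc chainMetric (x k0) q
            ≤ ∑ k ∈ Finset.Ico k0 n, (D : X → X → ℝ≥0∞) (x k) (x (k + 1)) := htail
          _ = (D : X → X → ℝ≥0∞) (x k0) (x (k0 + 1)) + T' := by
              rw [hT', Finset.sum_eq_sum_Ico_succ_bot hltn]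
          _ ≤ η / 2 + L / 2 := add_le_add (hx.2.2 k0 hltn) hT'le
    calc chainMetric (x k0) q ≤ η / 2 + L / 2 := h2
      _ ≤ η / 2 + (chainMetric p q / 2 + η / 2) :=
        add_le_add_right (hL2.trans (add_le_add_right ENNReal.half_le_self _)) _
      _ = chainMetric p q / 2 + (η / 2 + η / 2) := by ring
      _ = chainMetric p q / 2 + η := by rw [ENNReal.add_halves]

end Mid
section Dyadic
variable {X : Type*} [MetricSpace X]

open Classical in
noncomputable def approxMid (η : ℝ≥0∞) (a b : X) : X :=
  if hex : ∃ m : X, chainMetric a m ≤ chainMetric a b / 2 + η ∧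
      chainMetric m b ≤ chainMetric a b / 2 + η then hex.choose else a

lemma approxMid_spec
    (h : ∀ p q : X, chainMetricOf (fun a b => chainMetric a b) p q = chainMetric p q)
    {a b : X} (hfin : chainMetric a b ≠ ⊤) {η : ℝ≥0∞} (hη : 0 < η) :
    chainMetric a (approxMid η a b) ≤ chainMetric a b / 2 + η ∧
      chainMetric (approxMid η a b) b ≤ chainMetric a b / 2 + η := by
  have hex := exists_midpoint h a b hfin hη
  rw [approxMid, dif_pos hex]
  exact hex.choose_spec

noncomputable def dyadicPts (η : ℕ → ℝ≥0∞) (p q : X) : ℕ → ℕ → X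
  | 0 => fun k => if k = 0 then p else q
  | (n + 1) => fun k =>
      if k % 2 = 0 then dyadicPts η p q n (k / 2)
      else approxMid (η n) (dyadicPts η p q n (k / 2)) (dyadicPts η p q n (k / 2 + 1))

lemma dyadicPts_zero (η : ℕ → ℝ≥0∞) (p q : X) (n : ℕ) : dyadicPts η p q n 0 = p := by
  induction n with
  | zero => simp [dyadicPts]
  | succ n ih => simp [dyadicPts, ih]

lemma dyadicPts_last (η : ℕ → ℝ≥0∞) (p q : X) (n : ℕ) : dyadicPts η p q n (2 ^ n) = q := by
  induction n with
  | zero => simp [dyadicPts]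
  | succ n ih =>
    have h1 : 2 ^ (n + 1) % 2 = 0 := by omega
    have h2 : 2 ^ (n + 1) / 2 = 2 ^ n := by omega
    simp [dyadicPts, h1, h2, ih]

lemma dyadicPts_even (η : ℕ → ℝ≥0∞) (p q : X) (n k : ℕ) :
    dyadicPts η p q (n + 1) (2 * k) = dyadicPts η p q n k := by
  have h1 : 2 * k % 2 = 0 := by omega
  have h2 : 2 * k / 2 = k := by omega
  simp [dyadicPts, h1, h2]

lemma dyadicPts_odd (η : ℕ → ℝ≥0∞) (p q : X) (n k : ℕ) :
    dyadicPts η p q (n + 1) (2 * k + 1) =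
      approxMid (η n) (dyadicPts η p q n k) (dyadicPts η p q n (k + 1)) := by
  have h1 : ¬ (2 * k + 1) % 2 = 0 := by omega
  have h2 : (2 * k + 1) / 2 = k := by omega
  simp [dyadicPts, h1, h2]

end Dyadic
section Invariant
variable {X : Type*} [MetricSpace X]

lemma ennreal_quarter_add_quarter : (4⁻¹ : ℝ≥0∞) + 4⁻¹ = 2⁻¹ := by
  have h4 : (4 : ℝ≥0∞) = 2 * 2 := by norm_num
  have hinv : (4⁻¹ : ℝ≥0∞) = 2⁻¹ * 2⁻¹ := by
    rw [h4, ENNReal.mul_inv (Or.inl (by norm_num)) (Or.inl (by norm_num))]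
  rw [hinv, ← add_mul, ENNReal.inv_two_add_inv_two, one_mul]

lemma dyadic_step_bound
    (h : ∀ p q : X, chainMetricOf (fun a b => chainMetric a b) p q = chainMetric p q)
    (p q : X) (hfin : chainMetric p q ≠ ⊤) {δ : ℝ≥0∞} (hδ0 : 0 < δ) (hδt : δ ≠ ⊤) :
    ∀ n k, k < 2 ^ n →
      chainMetric (dyadicPts (fun n => δ * 4⁻¹ ^ (n + 1)) p q n k)
          (dyadicPts (fun n => δ * 4⁻¹ ^ (n + 1)) p q n (k + 1)) + δ * (4⁻¹ : ℝ≥0∞) ^ n ≤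
        (chainMetric p q + δ) * (2⁻¹ : ℝ≥0∞) ^ n := by
  set g := dyadicPts (fun n => δ * (4⁻¹ : ℝ≥0∞) ^ (n + 1)) p q with hg
  have hKt : chainMetric p q + δ ≠ ⊤ := ENNReal.add_ne_top.mpr ⟨hfin, hδt⟩
  have hinv2t : ∀ n : ℕ, ((2⁻¹ : ℝ≥0∞)) ^ n ≠ ⊤ := fun n =>
    ENNReal.pow_ne_top (ENNReal.inv_ne_top.mpr (by norm_num))
  have hηpos : ∀ n : ℕ, (0 : ℝ≥0∞) < δ * 4⁻¹ ^ (n + 1) := fun n => by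
    exact ENNReal.mul_pos hδ0.ne'
      (ENNReal.pow_pos (ENNReal.inv_pos.mpr (by norm_num)) (n + 1)).ne'
  intro n
  induction n with
  | zero =>
    intro k hk
    interval_cases k
    have h0 : g 0 0 = p := dyadicPts_zero _ p q 0
    have h1 : g 0 1 = q := by simp [hg, dyadicPts]
    simp [h0, h1]
  | succ n ih =>
    intro k hk
    have hpow : 2 ^ (n + 1) = 2 * 2 ^ n := by rw [pow_succ]; ring
    -- the key halving computation
    have halg : ∀ a b : ℝ≥0∞, a + δ * 4⁻¹ ^ n ≤ b →
        a * 2⁻¹ + δ * 4⁻¹ ^ (n + 1) + δ * 4⁻¹ ^ (n + 1) ≤ b * 2⁻¹ := by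
      intro a b hab
      have hq : δ * 4⁻¹ ^ (n + 1) + δ * 4⁻¹ ^ (n + 1) = δ * 4⁻¹ ^ n * 2⁻¹ := by
        rw [← ennreal_quarter_add_quarter, pow_succ]; ring
      rw [add_assoc, hq, ← add_mul]
      exact mul_le_mul_left hab _
    rcases Nat.even_or_odd k with ⟨j, hjj⟩ | ⟨j, hjj⟩
    · -- k = 2 * j
      have hj2 : k = 2 * j := by omega
      have hjlt : j < 2 ^ n := by omega
      have hab := ih j hjlt
      have habfin : chainMetric (g n j) (g n (j + 1)) ≠ ⊤ := by
        refine ne_top_of_le_ne_top (ENNReal.mul_ne_top hKt (hinv2t n)) ?_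
        exact le_trans (self_le_add_right _ _) hab
      have hspec := (approxMid_spec h habfin (hηpos n)).1
      rw [hj2, show 2 * j + 1 = 2 * j + 1 from rfl]
      rw [show g (n+1) (2*j) = g n j from dyadicPts_even _ p q n j,
        show g (n+1) (2*j+1) = approxMid (δ * 4⁻¹ ^ (n+1)) (g n j) (g n (j+1)) from
          dyadicPts_odd _ p q n j]
      calc chainMetric (g n j) (approxMid (δ * 4⁻¹ ^ (n+1)) (g n j) (g n (j+1)))
            + δ * 4⁻¹ ^ (n + 1)
          ≤ chainMetric (g n j) (g n (j+1)) / 2 + δ * 4⁻¹ ^ (n+1) + δ * 4⁻¹ ^ (n+1) :=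
            add_le_add_left hspec _
        _ = chainMetric (g n j) (g n (j+1)) * 2⁻¹ + δ * 4⁻¹ ^ (n+1) + δ * 4⁻¹ ^ (n+1) := by
            rw [div_eq_mul_inv]
        _ ≤ ((chainMetric p q + δ) * 2⁻¹ ^ n) * 2⁻¹ := halg _ _ hab
        _ = (chainMetric p q + δ) * 2⁻¹ ^ (n + 1) := by rw [mul_assoc, ← pow_succ]
    · -- k = 2 * j + 1
      have hjlt : j < 2 ^ n := by omega
      have hab := ih j hjlt
      have habfin : chainMetric (g n j) (g n (j + 1)) ≠ ⊤ := by
        refine ne_top_of_le_ne_top (ENNReal.mul_ne_top hKt (hinv2t n)) ?_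
        exact le_trans (self_le_add_right _ _) hab
      have hspec := (approxMid_spec h habfin (hηpos n)).2
      rw [hjj, show 2 * j + 1 + 1 = 2 * (j + 1) by ring]
      rw [show g (n+1) (2*(j+1)) = g n (j+1) from dyadicPts_even _ p q n (j+1),
        show g (n+1) (2*j+1) = approxMid (δ * 4⁻¹ ^ (n+1)) (g n j) (g n (j+1)) from
          dyadicPts_odd _ p q n j]
      calc chainMetric (approxMid (δ * 4⁻¹ ^ (n+1)) (g n j) (g n (j+1))) (g n (j+1))
            + δ * 4⁻¹ ^ (n + 1)
          ≤ chainMetric (g n j) (g n (j+1)) / 2 + δ * 4⁻¹ ^ (n+1) + δ * 4⁻¹ ^ (n+1) :=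
            add_le_add_left hspec _
        _ = chainMetric (g n j) (g n (j+1)) * 2⁻¹ + δ * 4⁻¹ ^ (n+1) + δ * 4⁻¹ ^ (n+1) := by
            rw [div_eq_mul_inv]
        _ ≤ ((chainMetric p q + δ) * 2⁻¹ ^ n) * 2⁻¹ := halg _ _ hab
        _ = (chainMetric p q + δ) * 2⁻¹ ^ (n + 1) := by rw [mul_assoc, ← pow_succ]

end Invariant
section Path
open scoped Topology
variable {X : Type*} [MetricSpace X] [CompleteSpace X]

lemma exists_good_path
    (h : ∀ p q : X, chainMetricOf (fun a b => chainMetric a b) p q = chainMetric p q)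
    (p q : X) (hfin : chainMetric p q ≠ ⊤) {δ : ℝ≥0∞} (hδ0 : 0 < δ) (hδt : δ ≠ ⊤) :
    ∃ γ : ℝ → X, γ 0 = p ∧ γ 1 = q ∧ ContinuousWrt (fun a b => edist a b) γ ∧
      pathLengthOf (fun a b => edist a b) γ ≤ chainMetric p q + δ := by
  haveI : Nonempty X := ⟨p⟩
  set K : ℝ≥0∞ := chainMetric p q + δ with hK
  have hKt : K ≠ ⊤ := ENNReal.add_ne_top.mpr ⟨hfin, hδt⟩
  have hinv2t : ∀ n : ℕ, ((2⁻¹ : ℝ≥0∞)) ^ n ≠ ⊤ := fun n =>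
    ENNReal.pow_ne_top (ENNReal.inv_ne_top.mpr (by norm_num))
  set g := dyadicPts (fun n => δ * (4⁻¹ : ℝ≥0∞) ^ (n + 1)) p q with hg
  have hstep : ∀ n k, k < 2 ^ n → chainMetric (g n k) (g n (k + 1)) ≤ K * 2⁻¹ ^ n :=
    fun n k hk => le_trans (self_le_add_right _ _) (dyadic_step_bound h p q hfin hδ0 hδt n k hk)
  have hrow : ∀ n k l, k ≤ l → l ≤ 2 ^ n →
      chainMetric (g n k) (g n l) ≤ (l - k : ℕ) * (K * 2⁻¹ ^ n) := by
    intro n k l hkl hl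
    refine le_trans (chain_sum_le _ chainMetric_self
      (fun a b c => chainMetric_triangle a b c) (g n) k l hkl) ?_
    have := Finset.sum_le_card_nsmul (Finset.Ico k l)
      (fun i => chainMetric (g n i) (g n (i + 1))) (K * 2⁻¹ ^ n)
      (fun i hi => hstep n i (by
        rw [Finset.mem_Ico] at hi; omega))
    rwa [Nat.card_Ico, nsmul_eq_mul] at this
  -- the approximating sequences
  set u : ℝ → ℝ := fun t => max 0 (min t 1) with hu
  have hu0 : ∀ t, 0 ≤ u t := fun t => le_max_left _ _
  have hu1 : ∀ t, u t ≤ 1 := fun t => max_le (by norm_num) (min_le_right _ _)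
  have huIcc : ∀ t ∈ Icc (0:ℝ) 1, u t = t := by
    intro t ht
    simp [hu, min_eq_left ht.2, max_eq_right ht.1]
  set a : ℝ → ℕ → ℕ := fun t n => ⌊u t * 2 ^ n⌋₊ with ha
  have ha_le : ∀ t n, a t n ≤ 2 ^ n := by
    intro t n
    have : u t * 2 ^ n ≤ ((2 ^ n : ℕ) : ℝ) := by
      push_cast
      nlinarith [hu1 t, pow_pos (by norm_num : (0:ℝ) < 2) n]
    exact Nat.floor_le_of_le this |>.trans (by simp [Nat.floor_natCast])
  have ha_lb : ∀ t n, 2 * a t n ≤ a t (n + 1) := by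
    intro t n
    apply Nat.le_floor
    push_cast
    have h1 : (⌊u t * 2 ^ n⌋₊ : ℝ) ≤ u t * 2 ^ n := Nat.floor_le (by positivity)
    have hp : (2:ℝ) ^ (n + 1) = 2 * 2 ^ n := by ring
    rw [hp]
    nlinarith
  have ha_ub : ∀ t n, a t (n + 1) ≤ 2 * a t n + 1 := by
    intro t n
    have h1 : u t * 2 ^ (n + 1) < 2 * (⌊u t * 2 ^ n⌋₊ : ℝ) + 2 := by
      have h0 := Nat.lt_floor_add_one (u t * 2 ^ n)
      have hp : u t * 2 ^ (n + 1) = 2 * (u t * 2 ^ n) := by ring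
      linarith
    have h2 : a t (n + 1) < 2 * a t n + 2 := by
      have h3 : (a t (n+1) : ℝ) ≤ u t * 2 ^ (n + 1) := Nat.floor_le (by positivity)
      have h4 : (a t (n+1) : ℝ) < 2 * (a t n : ℝ) + 2 := lt_of_le_of_lt h3 h1
      exact_mod_cast h4
    omega
  set y : ℝ → ℕ → X := fun t n => g n (a t n) with hy
  have hystep : ∀ t n, edist (y t n) (y t (n + 1)) ≤ (K * 2⁻¹) * 2⁻¹ ^ n := by
    intro t n
    have heq : y t n = g (n + 1) (2 * a t n) := (dyadicPts_even _ p q n (a t n)).symm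
    have hle2 : a t (n + 1) ≤ 2 ^ (n + 1) := ha_le t (n + 1)
    have hD := hrow (n + 1) (2 * a t n) (a t (n + 1)) (ha_lb t n) hle2
    have hcard : ((a t (n + 1) - 2 * a t n : ℕ) : ℝ≥0∞) ≤ 1 := by
      have := ha_ub t n
      have h5 : (a t (n + 1) - 2 * a t n : ℕ) ≤ 1 := by omega
      exact le_trans (Nat.cast_le.mpr h5) (by norm_num)
    calc edist (y t n) (y t (n + 1))
        ≤ chainMetric (y t n) (y t (n + 1)) := edist_le_chainMetric _ _
      _ = chainMetric (g (n + 1) (2 * a t n)) (g (n + 1) (a t (n + 1))) := by rw [heq]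
      _ ≤ ((a t (n + 1) - 2 * a t n : ℕ) : ℝ≥0∞) * (K * 2⁻¹ ^ (n + 1)) := hD
      _ ≤ 1 * (K * 2⁻¹ ^ (n + 1)) := mul_le_mul_left hcard _
      _ = (K * 2⁻¹) * 2⁻¹ ^ n := by rw [one_mul, pow_succ]; ring
  have hcauchy : ∀ t, CauchySeq (y t) := by
    intro t
    exact cauchySeq_of_edist_le_geometric 2⁻¹ (K * 2⁻¹)
      (ENNReal.inv_lt_one.mpr (by norm_num))
      (ENNReal.mul_ne_top hKt (ENNReal.inv_ne_top.mpr (by norm_num)))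
      (hystep t)
  set γ : ℝ → X := fun t => limUnder atTop (y t) with hγ
  have htend : ∀ t, Tendsto (y t) atTop (𝓝 (γ t)) := fun t => (hcauchy t).tendsto_limUnder
  -- endpoints
  have hγ0 : γ 0 = p := by
    have hy0 : y 0 = fun _ => p := by
      funext n
      have hu00 : u 0 = 0 := by simp [hu]
      have ha0 : a 0 n = 0 := by simp [ha, hu00]
      simp [hy, ha0, hg, dyadicPts_zero]
    refine tendsto_nhds_unique (htend 0) ?_
    rw [hy0]
    exact tendsto_const_nhds
  have hγ1 : γ 1 = q := by
    have hy1 : y 1 = fun _ => q := by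
      funext n
      have hu11 : u 1 = 1 := by norm_num [hu]
      have ha1 : a 1 n = 2 ^ n := by
        have h2 : u 1 * 2 ^ n = ((2 ^ n : ℕ) : ℝ) := by rw [hu11]; push_cast; ring
        simp only [ha]
        rw [h2, Nat.floor_natCast]
      simp [hy, ha1, hg, dyadicPts_last]
    refine tendsto_nhds_unique (htend 1) ?_
    rw [hy1]
    exact tendsto_const_nhds
  -- Lipschitz-type estimate
  have h2n21 : ∀ n : ℕ, (2 : ℝ≥0∞) ^ n * 2⁻¹ ^ n = 1 := by
    intro n
    rw [← mul_pow, ENNReal.mul_inv_cancel (by norm_num) (by norm_num), one_pow]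
  have hyy : ∀ s t n, u s ≤ u t →
      edist (y s n) (y t n) ≤ K * ENNReal.ofReal (u t - u s) + K * 2⁻¹ ^ n := by
    intro s t n hst
    have hale : a s n ≤ a t n :=
      Nat.floor_le_floor (mul_le_mul_of_nonneg_right hst (by positivity))
    have hD := hrow n (a s n) (a t n) hale (ha_le t n)
    have hcast : ((a t n - a s n : ℕ) : ℝ≥0∞) ≤ ENNReal.ofReal (u t - u s) * 2 ^ n + 1 := by
      have hr : ((a t n - a s n : ℕ) : ℝ) ≤ (u t - u s) * 2 ^ n + 1 := by
        rw [Nat.cast_sub hale]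
        have h1 : (a t n : ℝ) ≤ u t * 2 ^ n := Nat.floor_le (by positivity)
        have h2 : u s * 2 ^ n < (a s n : ℝ) + 1 := Nat.lt_floor_add_one _
        nlinarith
      have hnn : (0 : ℝ) ≤ u t - u s := sub_nonneg.mpr hst
      calc ((a t n - a s n : ℕ) : ℝ≥0∞)
          = ENNReal.ofReal ((a t n - a s n : ℕ) : ℝ) := (ENNReal.ofReal_natCast _).symm
        _ ≤ ENNReal.ofReal ((u t - u s) * 2 ^ n + 1) := ENNReal.ofReal_le_ofReal hr
        _ ≤ ENNReal.ofReal ((u t - u s) * 2 ^ n) + ENNReal.ofReal 1 := ENNReal.ofReal_add_le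
        _ = ENNReal.ofReal (u t - u s) * 2 ^ n + 1 := by
            rw [ENNReal.ofReal_mul hnn, ENNReal.ofReal_pow (by norm_num),
              ENNReal.ofReal_ofNat, ENNReal.ofReal_one]
    calc edist (y s n) (y t n)
        ≤ chainMetric (y s n) (y t n) := edist_le_chainMetric _ _
      _ ≤ ((a t n - a s n : ℕ) : ℝ≥0∞) * (K * 2⁻¹ ^ n) := hD
      _ ≤ (ENNReal.ofReal (u t - u s) * 2 ^ n + 1) * (K * 2⁻¹ ^ n) := mul_le_mul_left hcast _
      _ = K * ENNReal.ofReal (u t - u s) * (2 ^ n * 2⁻¹ ^ n) + K * 2⁻¹ ^ n := by ring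
      _ = K * ENNReal.ofReal (u t - u s) + K * 2⁻¹ ^ n := by rw [h2n21, mul_one]
  have hlim : ∀ s t, u s ≤ u t → edist (γ s) (γ t) ≤ K * ENNReal.ofReal (u t - u s) := by
    intro s t hst
    have hb : Tendsto (fun n : ℕ => K * ENNReal.ofReal (u t - u s) + K * 2⁻¹ ^ n) atTop
        (𝓝 (K * ENNReal.ofReal (u t - u s) + 0)) := by
      refine Tendsto.const_add _ ?_
      have hpow := ENNReal.tendsto_pow_atTop_nhds_zero_of_lt_one
        (ENNReal.inv_lt_one.mpr (by norm_num) : (2⁻¹ : ℝ≥0∞) < 1)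
      have := ENNReal.Tendsto.const_mul hpow (Or.inr hKt)
      simpa using this
    have := le_of_tendsto_of_tendsto' ((htend s).edist (htend t)) hb (fun n => hyy s t n hst)
    simpa using this
  have hucont : Continuous u := continuous_const.max (continuous_id.min continuous_const)
  have hLip : ∀ s t, edist (γ s) (γ t) ≤ K * ENNReal.ofReal |u t - u s| := by
    intro s t
    rcases le_total (u s) (u t) with hst | hst
    · exact (hlim s t hst).trans (le_of_eq (by rw [abs_of_nonneg (sub_nonneg.mpr hst)]))
    · rw [edist_comm]
      exact (hlim t s hst).trans (le_of_eq
        (by rw [abs_sub_comm, abs_of_nonneg (sub_nonneg.mpr hst)]))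
  have hcont : ContinuousWrt (fun a b : X => edist a b) γ := by
    intro t ht
    have hBtend : Tendsto (fun s => K * ENNReal.ofReal |u t - u s|)
        (𝓝[Icc (0:ℝ) 1] t) (𝓝 0) := by
      have h1 : Tendsto (fun s => |u t - u s|) (𝓝 t) (𝓝 0) := by
        have hc : Continuous fun s => |u t - u s| := (continuous_const.sub hucont).abs
        simpa using hc.tendsto t
      have h3 : Tendsto (fun s => ENNReal.ofReal |u t - u s|) (𝓝 t) (𝓝 0) := by
        simpa using ENNReal.tendsto_ofReal h1
      have h4 := ENNReal.Tendsto.const_mul h3 (Or.inr hKt)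
      rw [mul_zero] at h4
      exact h4.mono_left nhdsWithin_le_nhds
    exact tendsto_of_tendsto_of_tendsto_of_le_of_le tendsto_const_nhds hBtend
      (fun s => zero_le) (fun s => hLip s t)
  have hlen : pathLengthOf (fun a b : X => edist a b) γ ≤ K := by
    refine iSup_le fun n => iSup_le fun tt => iSup_le fun htt => ?_
    obtain ⟨h0, h1, hmono⟩ := htt
    have hterm : ∀ k, k < n →
        edist (γ (tt k)) (γ (tt (k+1))) ≤ K * ENNReal.ofReal (tt (k+1) - tt k) := by
      intro k hk
      have hm : tt k ∈ Icc (0:ℝ) 1 := by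
        constructor
        · rw [← h0]; exact hmono (Nat.zero_le k)
        · rw [← h1]; exact hmono hk.le
      have hm1 : tt (k+1) ∈ Icc (0:ℝ) 1 := by
        constructor
        · rw [← h0]; exact hmono (Nat.zero_le _)
        · rw [← h1]; exact hmono hk
      have hle := hlim (tt k) (tt (k+1))
        (by rw [huIcc _ hm, huIcc _ hm1]; exact hmono (Nat.le_succ k))
      rwa [huIcc _ hm, huIcc _ hm1] at hle
    calc ∑ k ∈ Finset.range n, edist (γ (tt k)) (γ (tt (k+1)))
        ≤ ∑ k ∈ Finset.range n, K * ENNReal.ofReal (tt (k+1) - tt k) :=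
          Finset.sum_le_sum fun k hk => hterm k (Finset.mem_range.mp hk)
      _ = K * ∑ k ∈ Finset.range n, ENNReal.ofReal (tt (k+1) - tt k) := by
          rw [Finset.mul_sum]
      _ = K * ENNReal.ofReal (∑ k ∈ Finset.range n, (tt (k+1) - tt k)) := by
          rw [ENNReal.ofReal_sum_of_nonneg
            (fun k _ => sub_nonneg.mpr (hmono (Nat.le_succ k)))]
      _ = K * ENNReal.ofReal 1 := by rw [Finset.sum_range_sub, h0, h1, sub_zero]
      _ = K := by rw [ENNReal.ofReal_one, mul_one]
  exact ⟨γ, hγ0, hγ1, hcont, hlen⟩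

end Path
section Directions
open scoped Topology
variable {X : Type*} [MetricSpace X]

lemma lengthMetric_le_chainMetric [CompleteSpace X]
    (h : ∀ p q : X, chainMetricOf (fun a b => chainMetric a b) p q = chainMetric p q)
    (p q : X) : lengthMetric p q ≤ chainMetric p q := by
  by_cases hfin : chainMetric p q = ⊤
  · rw [hfin]; exact le_top
  refine ENNReal.le_of_forall_pos_le_add fun ε hε _ => ?_
  obtain ⟨γ, h0, h1, hcont, hlen⟩ := exists_good_path h p q hfin
    (δ := (ε : ℝ≥0∞)) (ENNReal.coe_pos.mpr hε) ENNReal.coe_ne_top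
  exact le_trans (iInf₂_le γ ⟨hcont, h0, h1⟩) hlen

lemma chainMetric_le_pathLength {p q : X} {γ : ℝ → X}
    (hcont : ContinuousWrt (fun a b : X => edist a b) γ)
    (h0 : γ 0 = p) (h1 : γ 1 = q) :
    chainMetric p q ≤ pathLengthOf (fun a b : X => edist a b) γ := by
  refine iSup₂_le fun ε hε => ?_
  have hcon : ContinuousOn γ (Icc (0:ℝ) 1) := by
    intro t ht
    rw [ContinuousWithinAt, EMetric.tendsto_nhds]
    intro r hr
    exact hcont t ht (Iio_mem_nhds hr)
  have hunif := (isCompact_Icc : IsCompact (Icc (0:ℝ) 1)).uniformContinuousOn_of_continuous hcon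
  rw [EMetric.uniformContinuousOn_iff] at hunif
  obtain ⟨δ, hδ, hδε⟩ := hunif ε hε
  -- choose N big
  obtain ⟨N, hN0, hNδ⟩ : ∃ N : ℕ, 0 < N ∧ ENNReal.ofReal (1 / N) < δ := by
    rcases eq_or_ne δ ⊤ with rfl | hδt
    · exact ⟨1, one_pos, by simp [ENNReal.ofReal_lt_top]⟩
    · have hδR : 0 < δ.toReal := ENNReal.toReal_pos hδ.ne' hδt
      obtain ⟨n, hn⟩ := exists_nat_one_div_lt hδR
      refine ⟨n + 1, Nat.succ_pos n, ?_⟩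
      rw [ENNReal.ofReal_lt_iff_lt_toReal (by positivity) hδt]
      exact_mod_cast hn
  set tt : ℕ → ℝ := fun k => min ((k : ℝ) / N) 1 with htt
  have htt0 : tt 0 = 0 := by simp [htt]
  have httN : tt N = 1 := by
    have : (N : ℝ) / N = 1 := div_self (by positivity)
    simp [htt, this]
  have httmono : Monotone tt := by
    intro i j hij
    exact min_le_min (by gcongr) le_rfl
  have httIcc : ∀ k, tt k ∈ Icc (0:ℝ) 1 := by
    intro k
    exact ⟨le_min (by positivity) zero_le_one, min_le_right _ _⟩
  have httdiff : ∀ k : ℕ, 0 ≤ tt (k+1) - tt k ∧ tt (k+1) - tt k ≤ 1 / N := by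
    intro k
    refine ⟨sub_nonneg.mpr (httmono (Nat.le_succ k)), ?_⟩
    have hk1 : ((k:ℝ)+1) / N - (k:ℝ) / N = 1 / N := by
      rw [← sub_div]; congr 1; ring
    have hN0' : (0:ℝ) < N := by exact_mod_cast hN0
    have hcast : ((k+1 : ℕ) : ℝ) = (k:ℝ) + 1 := by push_cast; ring
    rcases le_total (((k:ℝ)+1) / N) 1 with hle | hle
    · have h1 : tt (k+1) = ((k:ℝ)+1) / N := by
        simp only [htt, hcast]
        exact min_eq_left hle
      have hmon : (k:ℝ)/N ≤ ((k:ℝ)+1)/N := by gcongr; linarith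
      have h2 : tt k = (k:ℝ) / N := by
        simp only [htt]
        exact min_eq_left (hmon.trans hle)
      rw [h1, h2, hk1]
    · have h1 : tt (k+1) = 1 := by
        simp only [htt, hcast]
        exact min_eq_right hle
      have hsum : ((k:ℝ)+1)/N = (k:ℝ)/N + 1/N := by field_simp
      rcases le_total ((k:ℝ)/N) 1 with hc | hc
      · have h2 : tt k = (k:ℝ)/N := by simp only [htt]; exact min_eq_left hc
        rw [h1, h2]
        rw [hsum] at hle
        linarith
      · have h2 : tt k = 1 := by simp only [htt]; exact min_eq_right hc
        have hp : (0:ℝ) ≤ 1/N := by positivity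
        rw [h1, h2]
        linarith
  -- build the chain
  have hchain : IsChainOf (fun a b : X => edist a b) ε p q (fun k => γ (tt k)) N := by
    refine ⟨by show γ (tt 0) = p; rw [htt0, h0], by show γ (tt N) = q; rw [httN, h1], ?_⟩
    intro k hk
    have hd := httdiff k
    have hedist : edist (tt k) (tt (k+1)) < δ := by
      rw [edist_dist, Real.dist_eq]
      refine lt_of_le_of_lt ?_ hNδ
      apply ENNReal.ofReal_le_ofReal
      rw [abs_sub_comm, abs_of_nonneg hd.1]
      exact hd.2
    exact (hδε (httIcc k) (httIcc (k+1)) hedist).le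
  have hle1 : chainDist ε p q ≤ chainLengthOf (fun a b : X => edist a b) (fun k => γ (tt k)) N :=
    chainDistOf_le_of_chain hchain
  refine hle1.trans ?_
  refine le_iSup_of_le N (le_iSup_of_le tt (le_iSup_of_le ⟨htt0, httN, httmono⟩ ?_))
  exact le_of_eq rfl

end Directions
/-- if `(X,d)` is complete and `(d_0)_0 = d_0`, then `d_0 = d̄`. -/
theorem chainMetric_eq_lengthMetric_of_idempotent {X : Type*} [MetricSpace X]
    [CompleteSpace X]
    (h : ∀ p q : X, chainMetricOf (fun a b => chainMetric a b) p q = chainMetric p q) :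
    ∀ p q : X, chainMetric p q = lengthMetric p q := by
  intro p q
  refine le_antisymm ?_ (lengthMetric_le_chainMetric h p q)
  refine le_iInf fun γ => le_iInf fun hγ => ?_
  exact chainMetric_le_pathLength hγ.1 hγ.2.1 hγ.2.2
end
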